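/- arXiv:1801.06112 — 5 statements merged into one kernel-verified Lean document; each statement's English description precedes it below -/
import Mathlib

section
/- Let K be a field, P = K[x_1,...,x_n], σ a term ordering on the monoid of power-products, and I, J ideals in P. If I is strictly contained in J, then the leading term ideal LT_σ(I) is strictly contained in LT_σ(J). -/
open MvPolynomial
open scoped Classical

namespace GB

variable {n : ℕ}

/-- The σ-leading exponent (leading term, as a power-product) of a polynomial;
`0` for the zero polynomial. -/
noncomputable def lexp {K : Type*} [CommSemiring K] (m : MonomialOrder (Fin n))
    (f : MvPolynomial (Fin n) K) : Fin n →₀ ℕ :=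
  m.toSyn.symm (f.support.sup fun d => m.toSyn d)

/-- The σ-leading coefficient. -/
noncomputable def lcoeff {K : Type*} [CommSemiring K] (m : MonomialOrder (Fin n))
    (f : MvPolynomial (Fin n) K) : K :=
  MvPolynomial.coeff (lexp m f) f

/-- The σ-leading monomial (leading coefficient times leading power-product). -/
noncomputable def LM {K : Type*} [CommSemiring K] (m : MonomialOrder (Fin n))
    (f : MvPolynomial (Fin n) K) : MvPolynomial (Fin n) K :=
  monomial (lexp m f) (lcoeff m f)

/-- The leading term ideal `LT_σ(I)` of an ideal, over a field. -/
noncomputable def LTIdeal {K : Type*} [Field K] (m : MonomialOrder (Fin n))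
    (I : Ideal (MvPolynomial (Fin n) K)) : Ideal (MvPolynomial (Fin n) K) :=
  Ideal.span {t | ∃ f ∈ I, f ≠ 0 ∧ t = monomial (lexp m f) (1 : K)}

/-- `G` is a σ-Gröbner basis of `I` (over a field). -/
def IsGB {K : Type*} [Field K] (m : MonomialOrder (Fin n))
    (G : Finset (MvPolynomial (Fin n) K)) (I : Ideal (MvPolynomial (Fin n) K)) : Prop :=
  (0 : MvPolynomial (Fin n) K) ∉ G ∧ (G : Set (MvPolynomial (Fin n) K)) ⊆ I ∧
    Ideal.span (G : Set (MvPolynomial (Fin n) K)) = I ∧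
    ∀ f ∈ I, f ≠ 0 → ∃ g ∈ G, lexp m g ≤ lexp m f

/-- `G` is the reduced σ-Gröbner basis of `I`. -/
def IsReducedGB {K : Type*} [Field K] (m : MonomialOrder (Fin n))
    (G : Finset (MvPolynomial (Fin n) K)) (I : Ideal (MvPolynomial (Fin n) K)) : Prop :=
  IsGB m G I ∧ (∀ g ∈ G, lcoeff m g = 1) ∧
    ∀ g ∈ G, ∀ d ∈ g.support, ∀ g' ∈ G, g' ≠ g → ¬ lexp m g' ≤ d

/-- `G` is a strong σ-Gröbner basis of the ideal `J ⊆ ℤ[x]` it generates. -/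
def IsStrongGB (m : MonomialOrder (Fin n)) (G : Finset (MvPolynomial (Fin n) ℤ))
    (J : Ideal (MvPolynomial (Fin n) ℤ)) : Prop :=
  (0 : MvPolynomial (Fin n) ℤ) ∉ G ∧ Ideal.span (G : Set (MvPolynomial (Fin n) ℤ)) = J ∧
    ∀ f ∈ J, f ≠ 0 → ∃ g ∈ G, LM m g ∣ LM m f

/-- `G` is a minimal strong σ-Gröbner basis of `J`. -/
def IsMinStrongGB (m : MonomialOrder (Fin n)) (G : Finset (MvPolynomial (Fin n) ℤ))
    (J : Ideal (MvPolynomial (Fin n) ℤ)) : Prop :=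
  IsStrongGB m G J ∧ ∀ g ∈ G, ∀ g' ∈ G, g ≠ g' → ¬ LM m g ∣ LM m g'

/-- The denominator of a polynomial with rational coefficients. -/
def den (f : MvPolynomial (Fin n) ℚ) : ℕ :=
  f.support.lcm fun d => (MvPolynomial.coeff d f).den

/-- The denominator of a finite set of polynomials. -/
noncomputable def denF (G : Finset (MvPolynomial (Fin n) ℚ)) : ℕ :=
  G.lcm den

/-- `f` scaled by `den f`, as an integer polynomial. -/
noncomputable def intScale (f : MvPolynomial (Fin n) ℚ) : MvPolynomial (Fin n) ℤ :=
  f.support.sum fun d => monomial d (MvPolynomial.coeff d f * (den f : ℚ)).num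

/-- The primitive integral part of a polynomial with rational coefficients. -/
noncomputable def primQ (f : MvPolynomial (Fin n) ℚ) : MvPolynomial (Fin n) ℤ :=
  (intScale f).support.sum fun d =>
    monomial d (MvPolynomial.coeff d (intScale f) /
      ((intScale f).support.gcd fun e => MvPolynomial.coeff e (intScale f)))

/-- Reduction of a rational number modulo `p` (meaningful when `p ∤ a.den`). -/
noncomputable def redQ (p : ℕ) (a : ℚ) : ZMod p :=
  (a.num : ZMod p) * (a.den : ZMod p)⁻¹

/-- Coefficientwise reduction modulo `p` of a polynomial with rational coefficients
(meaningful when `p` divides no coefficient denominator). -/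
noncomputable def piP (p : ℕ) (f : MvPolynomial (Fin n) ℚ) :
    MvPolynomial (Fin n) (ZMod p) :=
  f.support.sum fun d => monomial d (redQ p (MvPolynomial.coeff d f))

/-- A σ-ordered tuple of (necessarily distinct) power-products. -/
def SOrd (m : MonomialOrder (Fin n)) (L : List (Fin n →₀ ℕ)) : Prop :=
  L.Pairwise fun a b => m.toSyn a < m.toSyn b

/-- `T'` strictly σ-precedes `T`:  either `T` is a proper prefix of `T'`, or at the first
index where they differ (within both lengths) the entry of `T'` is σ-smaller. -/
def Prec (m : MonomialOrder (Fin n)) (T' T : List (Fin n →₀ ℕ)) : Prop :=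
  (T <+: T' ∧ T ≠ T') ∨
    ∃ k, k < T.length ∧ k < T'.length ∧ T.take k = T'.take k ∧
      m.toSyn (T'.getD k 0) < m.toSyn (T.getD k 0)

/-- `T'` σ-precedes or equals `T`. -/
def PrecEq (m : MonomialOrder (Fin n)) (T' T : List (Fin n →₀ ℕ)) : Prop :=
  Prec m T' T ∨ T' = T

/-- The minimal generating set of the monomial ideal `LT_σ(I)`: the set of leading
power-products of nonzero elements of `I` which are minimal w.r.t. divisibility. -/
def minGenSet {K : Type*} [Field K] (m : MonomialOrder (Fin n))
    (I : Ideal (MvPolynomial (Fin n) K)) : Set (Fin n →₀ ℕ) :=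
  {d | (∃ f ∈ I, f ≠ 0 ∧ lexp m f = d) ∧
    ∀ f ∈ I, f ≠ 0 → lexp m f ≤ d → lexp m f = d}

/-- `L` is the tuple `O_σ(I)`: the σ-ordered tuple of the minimal generating set
of `LT_σ(I)`. -/
def IsOsIdeal {K : Type*} [Field K] (m : MonomialOrder (Fin n))
    (I : Ideal (MvPolynomial (Fin n) K)) (L : List (Fin n →₀ ℕ)) : Prop :=
  SOrd m L ∧ ∀ d, d ∈ L ↔ d ∈ minGenSet m I

/-- `L` is the σ-ordered tuple of the interreduction of the set `S` of power-products. -/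
def IsOsSet (m : MonomialOrder (Fin n)) (S : Finset (Fin n →₀ ℕ))
    (L : List (Fin n →₀ ℕ)) : Prop :=
  SOrd m L ∧ ∀ d, d ∈ L ↔ (d ∈ S ∧ ∀ s ∈ S, s ≤ d → s = d)

end GB

namespace GB

lemma le_lexp {K : Type*} [CommSemiring K] (m : MonomialOrder (Fin n))
    {f : MvPolynomial (Fin n) K} {d : Fin n →₀ ℕ} (hd : d ∈ f.support) :
    m.toSyn d ≤ m.toSyn (lexp m f) := by
  unfold lexp
  rw [AddEquiv.apply_symm_apply]
  exact Finset.le_sup hd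

lemma lexp_mem {K : Type*} [CommSemiring K] (m : MonomialOrder (Fin n))
    {f : MvPolynomial (Fin n) K} (hf : f ≠ 0) : lexp m f ∈ f.support := by
  obtain ⟨d, hd, hsup⟩ := Finset.exists_mem_eq_sup f.support
    (MvPolynomial.support_nonempty.2 hf) (fun d => m.toSyn d)
  unfold lexp
  rw [hsup]
  simpa using hd

lemma lcoeff_ne_zero {K : Type*} [CommSemiring K] (m : MonomialOrder (Fin n))
    {f : MvPolynomial (Fin n) K} (hf : f ≠ 0) : lcoeff m f ≠ 0 :=
  MvPolynomial.mem_support_iff.mp (lexp_mem m hf)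

lemma LTIdeal_eq_span_image {K : Type*} [Field K] (m : MonomialOrder (Fin n))
    (I : Ideal (MvPolynomial (Fin n) K)) :
    LTIdeal m I = Ideal.span ((fun d => monomial d (1 : K)) ''
      {d | ∃ f ∈ I, f ≠ 0 ∧ lexp m f = d}) := by
  unfold LTIdeal
  congr 1
  ext t
  constructor
  · rintro ⟨f, hfI, hf0, rfl⟩
    exact ⟨lexp m f, ⟨f, hfI, hf0, rfl⟩, rfl⟩
  · rintro ⟨d, ⟨f, hfI, hf0, rfl⟩, rfl⟩
    exact ⟨f, hfI, hf0, rfl⟩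

lemma exists_of_mem_LTIdeal {K : Type*} [Field K] (m : MonomialOrder (Fin n))
    (I : Ideal (MvPolynomial (Fin n) K)) {e : Fin n →₀ ℕ}
    (he : (monomial e (1 : K)) ∈ LTIdeal m I) :
    ∃ g ∈ I, g ≠ 0 ∧ lexp m g ≤ e := by
  rw [LTIdeal_eq_span_image, MvPolynomial.mem_ideal_span_monomial_image] at he
  obtain ⟨d, ⟨g, hgI, hg0, rfl⟩, hle⟩ := he e (by simp)
  exact ⟨g, hgI, hg0, hle⟩

end GB


/-- If `I ⊊ J` then `LT_σ(I) ⊊ LT_σ(J)`. -/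
theorem stmt0 {n : ℕ} {K : Type*} [Field K] (m : MonomialOrder (Fin n))
    (I J : Ideal (MvPolynomial (Fin n) K)) (h : I < J) :
    GB.LTIdeal m I < GB.LTIdeal m J := by
  have hmono : GB.LTIdeal m I ≤ GB.LTIdeal m J := by
    apply Ideal.span_mono
    rintro t ⟨f, hfI, hf0, rfl⟩
    exact ⟨f, h.le hfI, hf0, rfl⟩
  refine lt_of_le_of_ne hmono (fun heq => h.not_ge ?_)
  have key : ∀ a : m.syn, ∀ f ∈ J, m.toSyn (GB.lexp m f) = a → f ∈ I := by
    intro a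
    induction a using WellFoundedLT.induction with
    | ind a ih =>
    intro f hfJ hfa
    by_cases hf0 : f = 0
    · simp [hf0]
    have hmem : (monomial (GB.lexp m f) (1 : K)) ∈ GB.LTIdeal m I := by
      rw [heq]
      exact Ideal.subset_span ⟨f, hfJ, hf0, rfl⟩
    obtain ⟨g, hgI, hg0, hgle⟩ := GB.exists_of_mem_LTIdeal m I hmem
    set q : MvPolynomial (Fin n) K :=
      monomial (GB.lexp m f - GB.lexp m g) (GB.lcoeff m f / GB.lcoeff m g) * g with hq
    have hqI : q ∈ I := Ideal.mul_mem_left I _ hgI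
    have hq_coeff : ∀ d, MvPolynomial.coeff d q ≠ 0 → m.toSyn d ≤ m.toSyn (GB.lexp m f) := by
      intro d hd
      rw [hq, MvPolynomial.coeff_monomial_mul'] at hd
      by_cases hled : GB.lexp m f - GB.lexp m g ≤ d
      · rw [if_pos hled] at hd
        have h2 : MvPolynomial.coeff (d - (GB.lexp m f - GB.lexp m g)) g ≠ 0 :=
          fun hc => hd (by rw [hc, mul_zero])
        have h3 := GB.le_lexp m (MvPolynomial.mem_support_iff.mpr h2)
        calc m.toSyn d = m.toSyn ((GB.lexp m f - GB.lexp m g)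
              + (d - (GB.lexp m f - GB.lexp m g))) := by rw [add_tsub_cancel_of_le hled]
          _ = m.toSyn (GB.lexp m f - GB.lexp m g)
              + m.toSyn (d - (GB.lexp m f - GB.lexp m g)) := by rw [map_add]
          _ ≤ m.toSyn (GB.lexp m f - GB.lexp m g) + m.toSyn (GB.lexp m g) :=
              add_le_add_right h3 _
          _ = m.toSyn ((GB.lexp m f - GB.lexp m g) + GB.lexp m g) := by rw [map_add]
          _ = m.toSyn (GB.lexp m f) := by rw [tsub_add_cancel_of_le hgle]
      · rw [if_neg hled] at hd; exact absurd rfl hd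
    have hq_lead : MvPolynomial.coeff (GB.lexp m f) q = GB.lcoeff m f := by
      rw [hq, MvPolynomial.coeff_monomial_mul',
        if_pos (tsub_le_self.trans le_rfl |>.trans le_rfl)]
      · rw [tsub_tsub_cancel_of_le hgle]
        exact div_mul_cancel₀ _ (GB.lcoeff_ne_zero m hg0)
    set h' : MvPolynomial (Fin n) K := f - q with hh'
    have hh'J : h' ∈ J := J.sub_mem hfJ (h.le hqI)
    have hcoeff0 : MvPolynomial.coeff (GB.lexp m f) h' = 0 := by
      rw [hh', MvPolynomial.coeff_sub, hq_lead]
      simp [GB.lcoeff]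
    by_cases hh0 : h' = 0
    · have : f = q := by
        have := sub_eq_zero.mp hh0
        exact this
      rw [this]; exact hqI
    · have hsupb : ∀ d ∈ h'.support, m.toSyn d ≤ m.toSyn (GB.lexp m f) := by
        intro d hd
        rw [MvPolynomial.mem_support_iff, hh', MvPolynomial.coeff_sub] at hd
        by_cases hdf : MvPolynomial.coeff d f ≠ 0
        · exact GB.le_lexp m (MvPolynomial.mem_support_iff.mpr hdf)
        · push_neg at hdf
          apply hq_coeff
          intro hc
          rw [hdf, hc, sub_zero] at hd
          exact hd rfl
      have hlt : m.toSyn (GB.lexp m h') < m.toSyn (GB.lexp m f) := by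
        refine lt_of_le_of_ne (hsupb _ (GB.lexp_mem m hh0)) (fun e => ?_)
        have := m.toSyn.injective e
        exact MvPolynomial.mem_support_iff.mp (GB.lexp_mem m hh0) (this ▸ hcoeff0)
      have hh'I : h' ∈ I := ih _ (hfa ▸ hlt) h' hh'J rfl
      have : f = h' + q := by rw [hh']; ring
      rw [this]
      exact I.add_mem hh'I hqI
  intro f hf
  exact key _ f hf rfl
end

section
/- Let K be a field, P = K[x_1,...,x_n], σ a term ordering, J an ideal in P, and F a finite set of nonzero polynomials in J. If F is not a σ-Gröbner basis of J, then O_σ(J) strictly σ-precedes O_σ(F), i.e. O_σ(J) ≺_σ O_σ(F). -/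
open MvPolynomial
open scoped Classical

namespace GBProof

open GB

/-- Every nonzero element of `J` has its leading exponent divisible by an element of
`minGenSet m J`. -/
lemma aux_min {n : ℕ} {K : Type*} [Field K] (m : MonomialOrder (Fin n))
    (J : Ideal (MvPolynomial (Fin n) K)) {f : MvPolynomial (Fin n) K}
    (hf : f ∈ J) (hf0 : f ≠ 0) :
    ∃ e ∈ GB.minGenSet m J, e ≤ GB.lexp m f := by
  classical
  set T : Set m.syn :=
    {x | ∃ g ∈ J, g ≠ 0 ∧ m.toSyn (GB.lexp m g) = x ∧ GB.lexp m g ≤ GB.lexp m f} with hT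
  have hne : T.Nonempty := ⟨m.toSyn (GB.lexp m f), f, hf, hf0, rfl, le_rfl⟩
  obtain ⟨x0, hx0, hmin⟩ := (m.wf.wf).has_min T hne
  obtain ⟨g, hgJ, hg0, hgx, hgle⟩ := hx0
  refine ⟨GB.lexp m g, ⟨⟨g, hgJ, hg0, rfl⟩, ?_⟩, hgle⟩
  intro f' hf'J hf'0 hle
  have h1 : m.toSyn (GB.lexp m f') ∈ T := ⟨f', hf'J, hf'0, rfl, le_trans hle hgle⟩
  have h2 : m.toSyn (GB.lexp m f') ≤ x0 := hgx ▸ m.toSyn_monotone hle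
  have h3 := hmin _ h1
  have h4 : m.toSyn (GB.lexp m f') = m.toSyn (GB.lexp m g) :=
    hgx ▸ le_antisymm h2 (not_lt.1 h3)
  exact m.toSyn.injective h4

/-- Combinatorial core: if `L`, `LF` are σ-sorted, the entries of `LF` form a ≤-antichain,
every entry of `LF` is divisible by an entry of `L`, and `L ≠ LF`, then `L ≺ LF`. -/
lemma aux_prec {n : ℕ} (m : MonomialOrder (Fin n)) :
    ∀ (LF L : List (Fin n →₀ ℕ)), GB.SOrd m L → GB.SOrd m LF →
      (∀ d ∈ LF, ∀ d' ∈ LF, d' ≤ d → d' = d) →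
      (∀ d ∈ LF, ∃ a ∈ L, a ≤ d) → L ≠ LF → GB.Prec m L LF
  | [], L, _, _, _, _, hne => Or.inl ⟨List.nil_prefix, fun h => hne h.symm⟩
  | b :: LF', [], _, _, _, hdiv, _ => by
      obtain ⟨a, ha, -⟩ := hdiv b List.mem_cons_self
      exact absurd ha List.not_mem_nil
  | b :: LF', a :: L', hL, hLF, hanti, hdiv, hne => by
    rcases lt_trichotomy (m.toSyn a) (m.toSyn b) with hab | hab | hab
    · exact Or.inr ⟨0, by simp, by simp, rfl, by simpa using hab⟩
    · have hab' : a = b := m.toSyn.injective hab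
      subst hab'
      have hL' : GB.SOrd m L' := (List.pairwise_cons.mp hL).2
      have hLF' : GB.SOrd m LF' := (List.pairwise_cons.mp hLF).2
      have hanti' : ∀ d ∈ LF', ∀ d' ∈ LF', d' ≤ d → d' = d := fun d hd d' hd' h =>
        hanti d (List.mem_cons_of_mem _ hd) d' (List.mem_cons_of_mem _ hd') h
      have hdiv' : ∀ d ∈ LF', ∃ a' ∈ L', a' ≤ d := by
        intro d hd
        obtain ⟨a', ha', hle⟩ := hdiv d (List.mem_cons_of_mem _ hd)
        rcases List.mem_cons.mp ha' with h | h
        · subst h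
          have h1 : a' = d := hanti d (List.mem_cons_of_mem _ hd) a'
            List.mem_cons_self hle
          have h2 : m.toSyn a' < m.toSyn d := (List.pairwise_cons.mp hLF).1 d hd
          rw [h1] at h2
          exact absurd h2 (lt_irrefl _)
        · exact ⟨a', h, hle⟩
      have hne' : L' ≠ LF' := fun h => hne (by rw [h])
      rcases aux_prec m LF' L' hL' hLF' hanti' hdiv' hne' with ⟨hpre, hne2⟩ | ⟨k, h1, h2, h3, h4⟩
      · exact Or.inl ⟨List.cons_prefix_cons.mpr ⟨rfl, hpre⟩, by
          intro h; exact hne2 (List.cons.injEq .. ▸ h : _ ∧ _).2⟩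
      · exact Or.inr ⟨k + 1, by simpa using h1, by simpa using h2,
          by simp [h3], by simpa using h4⟩
    · exfalso
      obtain ⟨a', ha', hle⟩ := hdiv b List.mem_cons_self
      have h1 : m.toSyn a' ≤ m.toSyn b := m.toSyn_monotone hle
      rcases List.mem_cons.mp ha' with h | h
      · subst h; exact absurd hab (not_lt.mpr h1)
      · have h2 : m.toSyn a < m.toSyn a' := (List.pairwise_cons.mp hL).1 a' h
        exact absurd (h2.trans_le h1) (not_lt.mpr hab.le)

end GBProof

/-- if `F ⊆ J` is not a σ-Gröbner basis of `J` then `O_σ(J) ≺_σ O_σ(F)`. -/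
theorem stmt4 {n : ℕ} {K : Type*} [Field K] (m : MonomialOrder (Fin n))
    (J : Ideal (MvPolynomial (Fin n) K)) (F : Finset (MvPolynomial (Fin n) K))
    (hF0 : (0 : MvPolynomial (Fin n) K) ∉ F) (hFJ : (F : Set (MvPolynomial (Fin n) K)) ⊆ J)
    (hnotGB : ¬ ∀ f ∈ J, f ≠ 0 → ∃ g ∈ F, GB.lexp m g ≤ GB.lexp m f)
    (L LF : List (Fin n →₀ ℕ))
    (hL : GB.IsOsIdeal m J L) (hLF : GB.IsOsSet m (F.image (GB.lexp m)) LF) :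
    GB.Prec m L LF := by
  classical
  push_neg at hnotGB
  obtain ⟨f, hfJ, hf0, hfree⟩ := hnotGB
  obtain ⟨hLs, hLmem⟩ := hL
  obtain ⟨hLFs, hLFmem⟩ := hLF
  obtain ⟨e, heMin, hele⟩ := GBProof.aux_min m J hfJ hf0
  have heL : e ∈ L := (hLmem e).2 heMin
  have heNotLF : e ∉ LF := by
    intro h
    obtain ⟨hS, -⟩ := (hLFmem e).1 h
    obtain ⟨g, hgF, hge⟩ := Finset.mem_image.1 hS
    exact hfree g hgF (hge ▸ hele)
  apply GBProof.aux_prec m LF L hLs hLFs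
  · intro d hd d' hd' hle
    obtain ⟨-, hmin⟩ := (hLFmem d).1 hd
    exact hmin d' ((hLFmem d').1 hd').1 hle
  · intro d hd
    obtain ⟨hS, -⟩ := (hLFmem d).1 hd
    obtain ⟨g, hgF, hge⟩ := Finset.mem_image.1 hS
    have hg0 : g ≠ 0 := fun h => hF0 (h ▸ hgF)
    obtain ⟨e', he', hle⟩ := GBProof.aux_min m J (hFJ hgF) hg0
    exact ⟨e', (hLmem e').2 he', hge ▸ hle⟩
  · intro h; exact heNotLF (h ▸ heL)
end

section
/- Let σ be a term ordering on T^n. Let T = (t_1,...,t_r) be an interreduced σ-ordered tuple of power-products and T' another finite set of power-products. Suppose there exist t' ∈ T' and an index k such that: t_1,...,t_{k-1} ∈ T'; t_k >_σ t'; and t' is not divisible by any t_i ∈ T. Then O_σ(T') ≺_σ T, and moreover T is not a proper prefix of O_σ(T'). -/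
open MvPolynomial
open scoped Classical

section Aux

variable {n : ℕ} (m : MonomialOrder (Fin n))

/-- Every element of `T'` is divisible by some element of the interreduction `L`. -/
lemma exists_min_div (T' : Finset (Fin n →₀ ℕ)) (L : List (Fin n →₀ ℕ))
    (hL : GB.IsOsSet m T' L) (w : Fin n →₀ ℕ) (hw : w ∈ T') :
    ∃ u ∈ L, u ≤ w := by
  classical
  obtain ⟨u, hu, hmin⟩ := (T'.filter (fun v => v ≤ w)).exists_min_image
    (fun v => m.toSyn v) ⟨w, by simp [hw]⟩
  simp only [Finset.mem_filter] at hu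
  refine ⟨u, ?_, hu.2⟩
  rw [(hL.2 u)]
  refine ⟨hu.1, fun v hv hvu => ?_⟩
  have hvw : v ≤ w := le_trans hvu hu.2
  have h1 := hmin v (Finset.mem_filter.mpr ⟨hv, hvw⟩)
  have h2 := m.toSyn_monotone hvu
  exact m.toSyn.injective (le_antisymm h2 h1)

lemma sorted_getElem_lt {L : List (Fin n →₀ ℕ)} (h : GB.SOrd m L)
    {i j : ℕ} (hij : i < j) (hj : j < L.length) :
    m.toSyn (L[i]'(lt_trans hij hj)) < m.toSyn (L[j]) :=
  List.pairwise_iff_getElem.mp h i j _ hj hij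

lemma mem_take_of_lt {L : List (Fin n →₀ ℕ)} (h : GB.SOrd m L)
    {a : Fin n →₀ ℕ} (ha : a ∈ L) {i : ℕ} (hi : i < L.length)
    (hlt : m.toSyn a < m.toSyn (L.getD i 0)) : a ∈ L.take i := by
  obtain ⟨j, hj, hja⟩ := List.mem_iff_getElem.mp ha
  have hji : j < i := by
    by_contra hc
    push_neg at hc
    rcases eq_or_lt_of_le hc with rfl | hlt2
    · rw [List.getD_eq_getElem L 0 hi, ← hja] at hlt
      exact lt_irrefl _ hlt
    · have := sorted_getElem_lt m h hlt2 hj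
      rw [List.getD_eq_getElem L 0 hi, ← hja] at hlt
      exact absurd hlt (not_lt.mpr this.le)
  have : (L.take i)[j]'(by simpa [List.length_take] using ⟨hji, hj⟩) = a := by
    rw [List.getElem_take]; exact hja
  exact this ▸ List.getElem_mem _

lemma lt_of_mem_take {L : List (Fin n →₀ ℕ)} (h : GB.SOrd m L)
    {a : Fin n →₀ ℕ} {i : ℕ} (hi : i < L.length) (ha : a ∈ L.take i) :
    m.toSyn a < m.toSyn (L.getD i 0) := by
  obtain ⟨j, hj, hja⟩ := List.mem_iff_getElem.mp ha
  rw [List.length_take] at hj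
  have hji : j < i := lt_of_lt_of_le hj (min_le_left _ _)
  rw [List.getElem_take] at hja
  rw [List.getD_eq_getElem L 0 hi, ← hja]
  exact sorted_getElem_lt m h hji hi

lemma getD_le_of_not_mem_take {L : List (Fin n →₀ ℕ)} (h : GB.SOrd m L)
    {a : Fin n →₀ ℕ} (ha : a ∈ L) {i : ℕ} (hi : i < L.length)
    (hna : a ∉ L.take i) : m.toSyn (L.getD i 0) ≤ m.toSyn a := by
  by_contra hc
  push_neg at hc
  exact hna (mem_take_of_lt m h ha hi hc)

end Aux

/-- the key lemma on interreduced σ-ordered tuples. -/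
theorem stmt6 {n : ℕ} (m : MonomialOrder (Fin n)) (T : List (Fin n →₀ ℕ))
    (hT : GB.SOrd m T)
    (hTint : ∀ s ∈ T, ∀ t ∈ T, s ≤ t → s = t)
    (T' : Finset (Fin n →₀ ℕ)) (t' : Fin n →₀ ℕ) (ht' : t' ∈ T')
    (k : ℕ) (hk : k < T.length)
    (hprev : ∀ i, i < k → T.getD i 0 ∈ T')
    (hlt : m.toSyn t' < m.toSyn (T.getD k 0))
    (hndvd : ∀ t ∈ T, ¬ t ≤ t')
    (L : List (Fin n →₀ ℕ)) (hL : GB.IsOsSet m T' L) :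
    GB.Prec m L T ∧ ¬ (T <+: L ∧ T ≠ L) := by
  classical
  obtain ⟨s, hsL, hst'⟩ := exists_min_div m T' L hL t' ht'
  have hsT : s ∉ T := fun hs => hndvd s hs hst'
  have key : ∃ j, j ≤ k ∧ j < L.length ∧ T.take j = L.take j ∧
      m.toSyn (L.getD j 0) < m.toSyn (T.getD j 0) := by
    have aux : ∀ i, i ≤ k → (∃ j, j ≤ k ∧ j < L.length ∧ T.take j = L.take j ∧
        m.toSyn (L.getD j 0) < m.toSyn (T.getD j 0)) ∨ T.take i = L.take i := by
      intro i
      induction i with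
      | zero => intro _; right; simp
      | succ i ih =>
        intro hik
        rcases ih (le_of_lt (Nat.lt_of_succ_le hik)) with h | hpre
        · left; exact h
        · have hik' : i < k := Nat.lt_of_succ_le hik
          have hiT : i < T.length := lt_trans hik' hk
          have hsnotin : s ∉ L.take i := by
            rw [← hpre]
            exact fun hmem => hsT (List.take_subset _ _ hmem)
          have hiL : i < L.length := by
            by_contra h
            push_neg at h
            rw [List.take_of_length_le h] at hsnotin
            exact hsnotin hsL
          rcases lt_trichotomy (m.toSyn (L.getD i 0)) (m.toSyn (T.getD i 0)) with h | h | h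
          · left; exact ⟨i, le_of_lt hik', hiL, hpre, h⟩
          · right
            have heq : L.getD i 0 = T.getD i 0 := m.toSyn.injective h
            rw [List.take_succ, List.take_succ, hpre,
              List.getElem?_eq_getElem hiT, List.getElem?_eq_getElem hiL]
            rw [List.getD_eq_getElem L 0 hiL, List.getD_eq_getElem T 0 hiT] at heq
            rw [heq]
          · exfalso
            have hTi' : T.getD i 0 ∈ T' := hprev i hik'
            obtain ⟨s2, hs2L, hs2le⟩ := exists_min_div m T' L hL _ hTi'
            have h2 : m.toSyn s2 < m.toSyn (L.getD i 0) :=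
              lt_of_le_of_lt (m.toSyn_monotone hs2le) h
            have hs2take : s2 ∈ L.take i := mem_take_of_lt m hL.1 hs2L hiL h2
            have hs2takeT : s2 ∈ T.take i := hpre ▸ hs2take
            have hs2T : s2 ∈ T := List.take_subset _ _ hs2takeT
            have hTiT : T.getD i 0 ∈ T := by
              rw [List.getD_eq_getElem T 0 hiT]; exact List.getElem_mem _
            have hs2eq : s2 = T.getD i 0 := hTint s2 hs2T _ hTiT hs2le
            have := lt_of_mem_take m hT hiT hs2takeT
            rw [hs2eq] at this
            exact lt_irrefl _ this
    rcases aux k le_rfl with h | hpre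
    · exact h
    · have hsnotin : s ∉ L.take k := by
        rw [← hpre]
        exact fun hmem => hsT (List.take_subset _ _ hmem)
      have hkL : k < L.length := by
        by_contra h
        push_neg at h
        rw [List.take_of_length_le h] at hsnotin
        exact hsnotin hsL
      refine ⟨k, le_rfl, hkL, hpre, ?_⟩
      calc m.toSyn (L.getD k 0) ≤ m.toSyn s :=
            getD_le_of_not_mem_take m hL.1 hsL hkL hsnotin
        _ ≤ m.toSyn t' := m.toSyn_monotone hst'
        _ < m.toSyn (T.getD k 0) := hlt
  obtain ⟨j, hjk, hjL, hjpre, hjlt⟩ := key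
  have hjT : j < T.length := lt_of_le_of_lt hjk hk
  constructor
  · exact Or.inr ⟨j, hjT, hjL, hjpre, hjlt⟩
  · rintro ⟨hpref, -⟩
    have : L.getD j 0 = T.getD j 0 := by
      rw [List.getD_eq_getElem L 0 hjL, List.getD_eq_getElem T 0 hjT]
      exact (List.IsPrefix.getElem hpref hjT).symm
    rw [this] at hjlt
    exact lt_irrefl _ hjlt
end

section
/- Let P = Q[x_1,...,x_n], σ a term ordering, I an ideal in P with reduced σ-Gröbner basis G_σ, and p a prime not dividing den(G_σ). Then π_p(G_σ) is the reduced σ-Gröbner basis of the ideal it generates in F_p[x_1,...,x_n]. -/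
open MvPolynomial
open scoped Classical

namespace Stmt7Aux

open GB

variable {n : ℕ} (p : ℕ) [Fact p.Prime]

lemma not_dvd_one : ¬ p ∣ 1 := by
  simpa [Nat.dvd_one] using (Fact.out : p.Prime).ne_one

lemma num_eq_mul_den (a : ℚ) : (a.num : ℚ) = a * a.den := by
  have h : (a.den : ℚ) ≠ 0 := by exact_mod_cast a.den_nz
  exact ((eq_div_iff h).1 (Rat.num_div_den a).symm).symm

lemma redQ_spec {q : ℚ} {M D : ℤ} (hD : ¬ (p : ℤ) ∣ D) (h : (M : ℚ) = q * (D : ℚ)) :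
    ¬ p ∣ q.den ∧ redQ p q = (M : ZMod p) * ((D : ℤ) : ZMod p)⁻¹ := by
  haveI : NeZero p := ⟨(Fact.out : p.Prime).ne_zero⟩
  have hpp : Prime (p : ℤ) := Nat.prime_iff_prime_int.1 Fact.out
  have hZ : M * (q.den : ℤ) = q.num * D := by
    have h2 : (M : ℚ) * (q.den : ℚ) = (q.num : ℚ) * (D : ℚ) := by
      rw [h, num_eq_mul_den]; ring
    exact_mod_cast h2
  have hden : ¬ p ∣ q.den := by
    intro hd
    have h1 : (p : ℤ) ∣ q.num * D := by
      rw [← hZ]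
      exact Dvd.dvd.mul_left (Int.natCast_dvd_natCast.2 hd) M
    rcases hpp.dvd_mul.1 h1 with h2 | h2
    · have h3 : p ∣ q.num.natAbs := by
        have := Int.natAbs_dvd_natAbs.2 h2
        simpa using this
      have h4 : p ∣ Nat.gcd q.num.natAbs q.den := Nat.dvd_gcd h3 hd
      rw [q.reduced] at h4
      exact not_dvd_one p h4
    · exact hD h2
  refine ⟨hden, ?_⟩
  have hu : ((q.den : ℕ) : ZMod p) ≠ 0 := by
    rw [Ne, ZMod.natCast_eq_zero_iff]
    exact hden
  have hv : ((D : ℤ) : ZMod p) ≠ 0 := by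
    rw [Ne, ZMod.intCast_zmod_eq_zero_iff_dvd]
    exact hD
  have hZp : (M : ZMod p) * ((q.den : ℕ) : ZMod p) = ((q.num : ℤ) : ZMod p) * ((D : ℤ) : ZMod p) := by
    have := congrArg (fun z : ℤ => (z : ZMod p)) hZ
    push_cast at this
    exact this
  rw [GB.redQ]
  field_simp
  linear_combination -hZp

lemma redQ_zero : redQ p (0 : ℚ) = 0 := by simp [GB.redQ]

lemma redQ_one : redQ p (1 : ℚ) = 1 := by simp [GB.redQ]

lemma redQ_natCast (k : ℕ) : redQ p (k : ℚ) = (k : ZMod p) := by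
  simp [GB.redQ]

lemma redQ_neg (a : ℚ) : redQ p (-a) = - redQ p a := by
  simp [GB.redQ, Rat.num_neg_eq_neg_num, Rat.den_neg_eq_den, neg_mul]

lemma redQ_add {a b : ℚ} (ha : ¬ p ∣ a.den) (hb : ¬ p ∣ b.den) :
    ¬ p ∣ (a + b).den ∧ redQ p (a + b) = redQ p a + redQ p b := by
  have hpp : Prime (p : ℤ) := Nat.prime_iff_prime_int.1 Fact.out
  have hD : ¬ (p : ℤ) ∣ ((a.den : ℤ) * (b.den : ℤ)) := by
    intro h
    rcases hpp.dvd_mul.1 h with h | h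
    · exact ha (Int.natCast_dvd_natCast.1 h)
    · exact hb (Int.natCast_dvd_natCast.1 h)
  have e1 := redQ_spec p (q := a) (M := a.num * b.den) hD
    (by push_cast; rw [num_eq_mul_den]; ring)
  have e2 := redQ_spec p (q := b) (M := b.num * a.den) hD
    (by push_cast; rw [num_eq_mul_den]; ring)
  have e3 := redQ_spec p (q := a + b) (M := a.num * b.den + b.num * a.den) hD
    (by push_cast; rw [num_eq_mul_den a, num_eq_mul_den b]; ring)
  refine ⟨e3.1, ?_⟩
  rw [e3.2, e1.2, e2.2]
  push_cast
  ring

lemma redQ_mul {a b : ℚ} (ha : ¬ p ∣ a.den) (hb : ¬ p ∣ b.den) :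
    ¬ p ∣ (a * b).den ∧ redQ p (a * b) = redQ p a * redQ p b := by
  have hpp : Prime (p : ℤ) := Nat.prime_iff_prime_int.1 Fact.out
  have hD : ¬ (p : ℤ) ∣ ((a.den : ℤ) * (b.den : ℤ)) := by
    intro h
    rcases hpp.dvd_mul.1 h with h | h
    · exact ha (Int.natCast_dvd_natCast.1 h)
    · exact hb (Int.natCast_dvd_natCast.1 h)
  have e3 := redQ_spec p (q := a * b) (M := a.num * b.num) hD
    (by push_cast; rw [num_eq_mul_den a, num_eq_mul_den b]; ring)
  refine ⟨e3.1, ?_⟩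
  rw [e3.2, GB.redQ, GB.redQ]
  push_cast
  rw [mul_inv]
  ring

lemma redQ_sub {a b : ℚ} (ha : ¬ p ∣ a.den) (hb : ¬ p ∣ b.den) :
    ¬ p ∣ (a - b).den ∧ redQ p (a - b) = redQ p a - redQ p b := by
  have hnb : ¬ p ∣ (-b).den := by rwa [Rat.den_neg_eq_den]
  have h := redQ_add p ha hnb
  rw [← sub_eq_add_neg] at h
  refine ⟨h.1, ?_⟩
  rw [h.2, redQ_neg, sub_eq_add_neg]


-- Polynomial-level lemmas

/-- All coefficient denominators of `f` are prime to `p`. -/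
def PF (f : MvPolynomial (Fin n) ℚ) : Prop := ∀ d, ¬ p ∣ (MvPolynomial.coeff d f).den

lemma coeff_piP (f : MvPolynomial (Fin n) ℚ) (d : Fin n →₀ ℕ) :
    MvPolynomial.coeff d (piP p f) = redQ p (MvPolynomial.coeff d f) := by
  rw [GB.piP, MvPolynomial.coeff_sum]
  simp only [MvPolynomial.coeff_monomial]
  rw [Finset.sum_ite_eq']
  split_ifs with h
  · rfl
  · rw [MvPolynomial.notMem_support_iff.1 h, redQ_zero]

lemma piP_zero : piP p (0 : MvPolynomial (Fin n) ℚ) = 0 := by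
  ext d
  rw [coeff_piP]
  simp [redQ_zero]

lemma support_piP_subset (f : MvPolynomial (Fin n) ℚ) : (piP p f).support ⊆ f.support := by
  intro d hd
  rw [MvPolynomial.mem_support_iff, coeff_piP] at hd
  rw [MvPolynomial.mem_support_iff]
  intro h
  exact hd (by rw [h, redQ_zero])

lemma redQ_sum {ι : Type*} (s : Finset ι) (F : ι → ℚ) (h : ∀ i ∈ s, ¬ p ∣ (F i).den) :
    ¬ p ∣ (∑ i ∈ s, F i).den ∧ redQ p (∑ i ∈ s, F i) = ∑ i ∈ s, redQ p (F i) := by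
  induction s using Finset.cons_induction with
  | empty =>
    refine ⟨by simpa [Rat.den_zero] using not_dvd_one p, by simp [redQ_zero]⟩
  | cons a s ha ih =>
    rw [Finset.sum_cons, Finset.sum_cons]
    have h2 := ih fun i hi => h i (Finset.mem_cons.2 (Or.inr hi))
    have h3 := redQ_add p (h a (Finset.mem_cons_self a s)) h2.1
    exact ⟨h3.1, by rw [h3.2, h2.2]⟩

lemma PF_mul {f g : MvPolynomial (Fin n) ℚ} (hf : PF p f) (hg : PF p g) : PF p (f * g) := by
  intro d
  rw [MvPolynomial.coeff_mul]
  exact (redQ_sum p _ _ fun uv _ => (redQ_mul p (hf uv.1) (hg uv.2)).1).1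

lemma piP_mul {f g : MvPolynomial (Fin n) ℚ} (hf : PF p f) (hg : PF p g) :
    piP p (f * g) = piP p f * piP p g := by
  ext d
  rw [coeff_piP, MvPolynomial.coeff_mul, MvPolynomial.coeff_mul,
    (redQ_sum p _ _ fun uv _ => (redQ_mul p (hf uv.1) (hg uv.2)).1).2]
  exact Finset.sum_congr rfl fun uv _ => by
    rw [(redQ_mul p (hf uv.1) (hg uv.2)).2, coeff_piP, coeff_piP]

lemma PF_sum {ι : Type*} (s : Finset ι) (F : ι → MvPolynomial (Fin n) ℚ)
    (h : ∀ i ∈ s, PF p (F i)) : PF p (∑ i ∈ s, F i) := by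
  intro d
  rw [MvPolynomial.coeff_sum]
  exact (redQ_sum p _ _ fun i hi => h i hi d).1

lemma piP_sum {ι : Type*} (s : Finset ι) (F : ι → MvPolynomial (Fin n) ℚ)
    (h : ∀ i ∈ s, PF p (F i)) : piP p (∑ i ∈ s, F i) = ∑ i ∈ s, piP p (F i) := by
  ext d
  rw [coeff_piP, MvPolynomial.coeff_sum, MvPolynomial.coeff_sum,
    (redQ_sum p _ _ fun i hi => h i hi d).2]
  exact Finset.sum_congr rfl fun i _ => (coeff_piP p _ _).symm

lemma PF_sub {f g : MvPolynomial (Fin n) ℚ} (hf : PF p f) (hg : PF p g) : PF p (f - g) := by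
  intro d
  rw [MvPolynomial.coeff_sub]
  exact (redQ_sub p (hf d) (hg d)).1

lemma piP_sub {f g : MvPolynomial (Fin n) ℚ} (hf : PF p f) (hg : PF p g) :
    piP p (f - g) = piP p f - piP p g := by
  ext d
  rw [coeff_piP, MvPolynomial.coeff_sub, MvPolynomial.coeff_sub, (redQ_sub p (hf d) (hg d)).2,
    coeff_piP, coeff_piP]

lemma PF_monomial (e : Fin n →₀ ℕ) {c : ℚ} (hc : ¬ p ∣ c.den) :
    PF p (MvPolynomial.monomial e c) := by
  intro d
  rw [MvPolynomial.coeff_monomial]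
  split_ifs with h
  · exact hc
  · simpa [Rat.den_zero] using not_dvd_one p

lemma piP_monomial (e : Fin n →₀ ℕ) (c : ℚ) :
    piP p (MvPolynomial.monomial e c) = MvPolynomial.monomial e (redQ p c) := by
  ext d
  rw [coeff_piP, MvPolynomial.coeff_monomial, MvPolynomial.coeff_monomial]
  split_ifs with h
  · rfl
  · exact redQ_zero p

/-- Coefficientwise integral lift of a polynomial over `ZMod p`. -/
noncomputable def intLift (x : MvPolynomial (Fin n) (ZMod p)) : MvPolynomial (Fin n) ℚ :=
  x.support.sum fun d => MvPolynomial.monomial d (((MvPolynomial.coeff d x).val : ℕ) : ℚ)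

lemma coeff_intLift (x : MvPolynomial (Fin n) (ZMod p)) (d : Fin n →₀ ℕ) :
    MvPolynomial.coeff d (intLift p x) = (((MvPolynomial.coeff d x).val : ℕ) : ℚ) := by
  haveI : NeZero p := ⟨(Fact.out : p.Prime).ne_zero⟩
  rw [intLift, MvPolynomial.coeff_sum]
  simp only [MvPolynomial.coeff_monomial]
  rw [Finset.sum_ite_eq']
  split_ifs with h
  · rfl
  · rw [MvPolynomial.notMem_support_iff.1 h]
    simp

lemma PF_intLift (x : MvPolynomial (Fin n) (ZMod p)) : PF p (intLift p x) := by
  intro d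
  rw [coeff_intLift, Rat.den_natCast]
  exact not_dvd_one p

lemma piP_intLift (x : MvPolynomial (Fin n) (ZMod p)) : piP p (intLift p x) = x := by
  haveI : NeZero p := ⟨(Fact.out : p.Prime).ne_zero⟩
  ext d
  rw [coeff_piP, coeff_intLift, redQ_natCast, ZMod.natCast_val, ZMod.cast_id]

-- lexp lemmas

lemma le_lexp {K : Type*} [CommSemiring K] (m : MonomialOrder (Fin n))
    {f : MvPolynomial (Fin n) K} {d : Fin n →₀ ℕ} (h : d ∈ f.support) :
    m.toSyn d ≤ m.toSyn (lexp m f) := by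
  rw [GB.lexp, AddEquiv.apply_symm_apply]
  exact Finset.le_sup h

lemma lexp_mem_support {K : Type*} [CommSemiring K] (m : MonomialOrder (Fin n))
    {f : MvPolynomial (Fin n) K} (hf : f ≠ 0) : GB.lexp m f ∈ f.support := by
  obtain ⟨b, hb, he⟩ := Finset.exists_mem_eq_sup f.support
    (MvPolynomial.support_nonempty.2 hf) (fun d => m.toSyn d)
  rw [GB.lexp, he, AddEquiv.symm_apply_apply]
  exact hb

lemma lexp_eq_of {K L : Type*} [CommSemiring K] [CommSemiring L] (m : MonomialOrder (Fin n))
    {f : MvPolynomial (Fin n) K} {g : MvPolynomial (Fin n) L} (hsub : g.support ⊆ f.support)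
    (hmem : GB.lexp m f ∈ g.support) : GB.lexp m g = GB.lexp m f := by
  have hg0 : g ≠ 0 := by
    intro h
    rw [h] at hmem
    simp at hmem
  apply m.toSyn.injective
  exact le_antisymm (le_lexp m (hsub (lexp_mem_support m hg0))) (le_lexp m hmem)

lemma coeff_eq_zero_of_lt {K : Type*} [CommSemiring K] (m : MonomialOrder (Fin n))
    {f : MvPolynomial (Fin n) K} {d : Fin n →₀ ℕ}
    (h : m.toSyn (GB.lexp m f) < m.toSyn d) : MvPolynomial.coeff d f = 0 := by
  by_contra hc
  exact absurd (le_lexp m (MvPolynomial.mem_support_iff.2 hc)) (not_le.2 h)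

lemma PF_of_mem {G : Finset (MvPolynomial (Fin n) ℚ)} (hp : ¬ p ∣ GB.denF G)
    {g : MvPolynomial (Fin n) ℚ} (hg : g ∈ G) : PF p g := by
  intro d
  by_cases hd : d ∈ g.support
  · intro h
    exact hp (h.trans (((show (MvPolynomial.coeff d g).den ∣ GB.den g from
      Finset.dvd_lcm hd)).trans (show GB.den g ∣ GB.denF G from Finset.dvd_lcm hg)))
  · rw [MvPolynomial.notMem_support_iff.1 hd]
    simpa [Rat.den_zero] using not_dvd_one p


lemma main (m : MonomialOrder (Fin n)) (I : Ideal (MvPolynomial (Fin n) ℚ))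
    (G : Finset (MvPolynomial (Fin n) ℚ)) (hG : GB.IsReducedGB m G I)
    (hpG : ∀ g ∈ G, PF p g) :
    ∀ F, PF p F → F ∈ I → piP p F ≠ 0 →
      ∃ g ∈ G, GB.lexp m g ≤ GB.lexp m (piP p F) := by
  have H : ∀ s : m.syn, ∀ F, m.toSyn (GB.lexp m F) = s → PF p F → F ∈ I → piP p F ≠ 0 →
      ∃ g ∈ G, GB.lexp m g ≤ GB.lexp m (piP p F) := by
    intro s
    induction s using WellFoundedLT.induction with
    | ind s IH =>
      intro F hs hPF hFI hne
      have hF0 : F ≠ 0 := by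
        rintro rfl
        exact hne (piP_zero p)
      obtain ⟨g, hg, hle⟩ := hG.1.2.2.2 F hFI hF0
      by_cases hc : redQ p (GB.lcoeff m F) = 0
      · set c := GB.lcoeff m F with hc_def
        set e := GB.lexp m F - GB.lexp m g with he_def
        have he : e + GB.lexp m g = GB.lexp m F := tsub_add_cancel_of_le hle
        set F' := F - MvPolynomial.monomial e c * g with hF'_def
        have hgPF := hpG g hg
        have hcden : ¬ p ∣ c.den := hPF _
        have hmonPF : PF p (MvPolynomial.monomial e c) := PF_monomial p e hcden
        have hprodPF : PF p (MvPolynomial.monomial e c * g) := PF_mul p hmonPF hgPF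
        have hPF' : PF p F' := PF_sub p hPF hprodPF
        have hpi' : piP p F' = piP p F := by
          rw [hF'_def, piP_sub p hPF hprodPF, piP_mul p hmonPF hgPF, piP_monomial, hc]
          simp
        have hF'I : F' ∈ I := Ideal.sub_mem I hFI (Ideal.mul_mem_left I _ (hG.1.2.1 hg))
        have hne' : piP p F' ≠ 0 := by
          rw [hpi']
          exact hne
        have hF'0 : F' ≠ 0 := by
          intro h
          rw [h, piP_zero] at hne'
          exact hne' rfl
        have hsupp : ∀ d ∈ F'.support, m.toSyn d < m.toSyn (GB.lexp m F) := by
          intro d hd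
          rcases lt_trichotomy (m.toSyn d) (m.toSyn (GB.lexp m F)) with h | h | h
          · exact h
          · exfalso
            have hdF : d = GB.lexp m F := m.toSyn.injective h
            have heled : e ≤ GB.lexp m F := by
              rw [← he]
              exact self_le_add_right e (GB.lexp m g)
            have hsub : GB.lexp m F - e = GB.lexp m g := by
              rw [← he, add_tsub_cancel_left]
            have hcg : MvPolynomial.coeff (GB.lexp m g) g = 1 := hG.2.1 g hg
            have hzero : MvPolynomial.coeff d F' = 0 := by
              rw [hF'_def, hdF, MvPolynomial.coeff_sub, MvPolynomial.coeff_monomial_mul',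
                if_pos heled, hsub, hcg, mul_one]
              exact sub_self c
            exact MvPolynomial.mem_support_iff.1 hd hzero
          · exfalso
            have h1 : MvPolynomial.coeff d F = 0 := coeff_eq_zero_of_lt m h
            have h2 : MvPolynomial.coeff d (MvPolynomial.monomial e c * g) = 0 := by
              rw [MvPolynomial.coeff_monomial_mul']
              split_ifs with hed
              · have hg0 : MvPolynomial.coeff (d - e) g = 0 := by
                  by_contra hgg
                  have hde : d - e + e = d := tsub_add_cancel_of_le hed
                  have hle2 : m.toSyn d ≤ m.toSyn (GB.lexp m F) := by
                    calc m.toSyn d = m.toSyn (d - e) + m.toSyn e := by rw [← map_add, hde]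
                      _ ≤ m.toSyn (GB.lexp m g) + m.toSyn e :=
                          add_le_add_left (le_lexp m (MvPolynomial.mem_support_iff.2 hgg)) _
                      _ = m.toSyn (GB.lexp m F) := by rw [← map_add, add_comm, he]
                  exact absurd hle2 (not_le.2 h)
                rw [hg0, mul_zero]
              · rfl
            have hzero : MvPolynomial.coeff d F' = 0 := by
              rw [hF'_def, MvPolynomial.coeff_sub, h1, h2, sub_zero]
            exact MvPolynomial.mem_support_iff.1 hd hzero
        have hlt : m.toSyn (GB.lexp m F') < s := by
          rw [← hs]
          exact hsupp _ (lexp_mem_support m hF'0)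
        obtain ⟨g', hg', hle'⟩ := IH _ hlt F' rfl hPF' hF'I hne'
        rw [hpi'] at hle'
        exact ⟨g', hg', hle'⟩
      · have hmem : GB.lexp m F ∈ (piP p F).support := by
          rw [MvPolynomial.mem_support_iff, coeff_piP]
          exact hc
        have heq : GB.lexp m (piP p F) = GB.lexp m F :=
          lexp_eq_of m (support_piP_subset p F) hmem
        refine ⟨g, hg, ?_⟩
        rw [heq]
        exact hle
  exact fun F hPF hFI hne => H _ F rfl hPF hFI hne

lemma lift_exists (G : Finset (MvPolynomial (Fin n) ℚ)) (hpG : ∀ g ∈ G, PF p g)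
    {f : MvPolynomial (Fin n) (ZMod p)}
    (hf : f ∈ Ideal.span ((G.image (piP p) : Finset (MvPolynomial (Fin n) (ZMod p))) :
      Set (MvPolynomial (Fin n) (ZMod p)))) :
    ∃ F, PF p F ∧ F ∈ Ideal.span (G : Set (MvPolynomial (Fin n) ℚ)) ∧ piP p F = f := by
  obtain ⟨c, -, hcf⟩ := Submodule.mem_span_finset.1 hf
  have hpre : ∀ h : {x // x ∈ G.image (piP p)},
      ∃ g, g ∈ G ∧ piP p g = (h : MvPolynomial (Fin n) (ZMod p)) := by
    intro h
    obtain ⟨g, hg, hgh⟩ := Finset.mem_image.1 h.2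
    exact ⟨g, hg, hgh⟩
  choose pre hpreG hpreP using hpre
  refine ⟨∑ h ∈ (G.image (piP p)).attach, intLift p (c h.1) * pre h, ?_, ?_, ?_⟩
  · exact PF_sum p _ _ fun h _ => PF_mul p (PF_intLift p _) (hpG _ (hpreG h))
  · exact Ideal.sum_mem _ fun h _ => Ideal.mul_mem_left _ _ (Ideal.subset_span (hpreG h))
  · rw [piP_sum p _ _ fun h _ => PF_mul p (PF_intLift p _) (hpG _ (hpreG h))]
    have hcong : ∀ h ∈ (G.image (piP p)).attach,
        piP p (intLift p (c h.1) * pre h) = c h.1 * h.1 := by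
      intro h _
      rw [piP_mul p (PF_intLift p _) (hpG _ (hpreG h)), piP_intLift, hpreP]
    rw [Finset.sum_congr rfl hcong, Finset.sum_attach _ (fun y => c y * y)]
    simpa [smul_eq_mul] using hcf

end Stmt7Aux


/-- reduction mod a σ-good prime of the reduced σ-Gröbner basis is
the reduced σ-Gröbner basis of the ideal it generates. -/
theorem stmt7 {n : ℕ} (m : MonomialOrder (Fin n))
    (I : Ideal (MvPolynomial (Fin n) ℚ)) (G : Finset (MvPolynomial (Fin n) ℚ))
    (hG : GB.IsReducedGB m G I) (p : ℕ) [Fact p.Prime] (hp : ¬ p ∣ GB.denF G) :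
    GB.IsReducedGB m (G.image (GB.piP p))
      (Ideal.span ((G.image (GB.piP p) : Finset (MvPolynomial (Fin n) (ZMod p))) :
        Set (MvPolynomial (Fin n) (ZMod p)))) := by
  have hpG : ∀ g ∈ G, Stmt7Aux.PF p g := fun g hg => Stmt7Aux.PF_of_mem p hp hg
  have himg : ∀ g ∈ G, GB.lexp m (GB.piP p g) = GB.lexp m g ∧ GB.piP p g ≠ 0 := by
    intro g hg
    have h1 : MvPolynomial.coeff (GB.lexp m g) (GB.piP p g) = 1 := by
      rw [Stmt7Aux.coeff_piP,
        show MvPolynomial.coeff (GB.lexp m g) g = GB.lcoeff m g from rfl, hG.2.1 g hg,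
        Stmt7Aux.redQ_one]
    have hne : GB.piP p g ≠ 0 := by
      intro h
      rw [h, MvPolynomial.coeff_zero] at h1
      exact one_ne_zero h1.symm
    have hmem : GB.lexp m g ∈ (GB.piP p g).support := by
      rw [MvPolynomial.mem_support_iff, h1]
      exact one_ne_zero
    exact ⟨Stmt7Aux.lexp_eq_of m (Stmt7Aux.support_piP_subset p g) hmem, hne⟩
  refine ⟨⟨?_, ?_, rfl, ?_⟩, ?_, ?_⟩
  · intro h0
    obtain ⟨g, hg, hgeq⟩ := Finset.mem_image.1 h0
    exact (himg g hg).2 hgeq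
  · exact Ideal.subset_span
  · intro f hf hf0
    obtain ⟨F, hPF, hFI, hpiF⟩ := Stmt7Aux.lift_exists p G hpG hf
    rw [hG.1.2.2.1] at hFI
    obtain ⟨g, hg, hle⟩ := Stmt7Aux.main p m I G hG hpG F hPF hFI
      (by rw [hpiF]; exact hf0)
    refine ⟨GB.piP p g, Finset.mem_image_of_mem _ hg, ?_⟩
    rw [(himg g hg).1]
    rwa [hpiF] at hle
  · intro h hh
    obtain ⟨g, hg, rfl⟩ := Finset.mem_image.1 hh
    rw [GB.lcoeff, (himg g hg).1, Stmt7Aux.coeff_piP,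
      show MvPolynomial.coeff (GB.lexp m g) g = GB.lcoeff m g from rfl, hG.2.1 g hg,
      Stmt7Aux.redQ_one]
  · intro h hh d hd h' hh' hne
    obtain ⟨g, hg, rfl⟩ := Finset.mem_image.1 hh
    obtain ⟨g', hg', rfl⟩ := Finset.mem_image.1 hh'
    have hgg' : g' ≠ g := fun e => hne (by rw [e])
    have hd' : d ∈ g.support := Stmt7Aux.support_piP_subset p g hd
    rw [(himg g' hg').1]
    exact hG.2.2 g hg d hd' g' hg' hgg'
end

section
/- Let P = Q[x_1,...,x_n], let σ and τ be two term orderings, I an ideal in P with reduced Gröbner bases G_σ and G_τ with respect to σ and τ respectively. If a prime p divides neither den(G_σ) nor den(G_τ), then the ideal generated by π_p(G_σ) equals the ideal generated by π_p(G_τ) in F_p[x_1,...,x_n]. -/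
open MvPolynomial
open scoped Classical

namespace GBAux

open GB MvPolynomial

theorem rat_num_cast (q : ℚ) : (q.num : ℚ) = q * q.den :=
  (div_eq_iff (by exact_mod_cast q.den_nz : (q.den:ℚ) ≠ 0)).mp (Rat.num_div_den q)

theorem add_num_identity (a b : ℚ) :
    ((a+b).num * (a.den * b.den) : ℤ) = (a.num * b.den + b.num * a.den) * (a+b).den := by
  have h : (((a+b).num * (a.den * b.den) : ℤ) : ℚ)
      = (((a.num * b.den + b.num * a.den) * (a+b).den : ℤ) : ℚ) := by
    push_cast
    rw [rat_num_cast (a+b), rat_num_cast a, rat_num_cast b]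
    ring
  exact_mod_cast h

theorem mul_num_identity (a b : ℚ) :
    ((a*b).num * (a.den * b.den) : ℤ) = a.num * b.num * (a*b).den := by
  have h : (((a*b).num * (a.den * b.den) : ℤ) : ℚ) = ((a.num * b.num * (a*b).den : ℤ) : ℚ) := by
    push_cast
    rw [rat_num_cast (a*b), rat_num_cast a, rat_num_cast b]
    ring
  exact_mod_cast h

variable (p : ℕ) [Fact p.Prime]

theorem den_nz {q : ℚ} (h : ¬ p ∣ q.den) : ((q.den : ZMod p)) ≠ 0 := by
  simpa [ZMod.natCast_eq_zero_iff] using h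

theorem redQ_def (q : ℚ) : GB.redQ p q = (q.num : ZMod p) / (q.den : ZMod p) := by
  rw [GB.redQ, div_eq_mul_inv]

theorem redQ_add {a b : ℚ} (ha : ¬ p ∣ a.den) (hb : ¬ p ∣ b.den) :
    GB.redQ p (a+b) = GB.redQ p a + GB.redQ p b := by
  have hab : ¬ p ∣ (a+b).den := fun h =>
    (((Fact.out : p.Prime).dvd_mul.mp (h.trans (Rat.add_den_dvd a b))).elim ha hb)
  have key : (((a+b).num : ZMod p)) * ((a.den :ZMod p) * (b.den:ZMod p)) =
      ((a.num:ZMod p) * (b.den:ZMod p) + (b.num:ZMod p) * (a.den:ZMod p)) * ((a+b).den:ZMod p) := by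
    have h2 := congrArg (fun z : ℤ => (z : ZMod p)) (add_num_identity a b)
    push_cast at h2
    linear_combination h2
  rw [redQ_def, redQ_def, redQ_def]
  field_simp [den_nz p ha, den_nz p hb, den_nz p hab]
  linear_combination key

theorem redQ_mul {a b : ℚ} (ha : ¬ p ∣ a.den) (hb : ¬ p ∣ b.den) :
    GB.redQ p (a*b) = GB.redQ p a * GB.redQ p b := by
  have hab : ¬ p ∣ (a*b).den := fun h =>
    (((Fact.out : p.Prime).dvd_mul.mp (h.trans (Rat.mul_den_dvd a b))).elim ha hb)
  have key : (((a*b).num : ZMod p)) * ((a.den :ZMod p) * (b.den:ZMod p)) =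
      (a.num:ZMod p) * (b.num:ZMod p) * ((a*b).den:ZMod p) := by
    have h2 := congrArg (fun z : ℤ => (z : ZMod p)) (mul_num_identity a b)
    push_cast at h2
    linear_combination h2
  rw [redQ_def, redQ_def, redQ_def]
  field_simp [den_nz p ha, den_nz p hb, den_nz p hab]
  linear_combination key

theorem redQ_zero : GB.redQ p 0 = 0 := by simp [GB.redQ]
theorem redQ_one : GB.redQ p 1 = 1 := by simp [GB.redQ]

/-- The subring of `ℚ` of elements with denominator coprime to `p`. -/
def S : Subring ℚ where
  carrier := {q | ¬ p ∣ q.den}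
  zero_mem' := by simp [(Fact.out : p.Prime).one_lt.ne']
  one_mem' := by simp [(Fact.out : p.Prime).one_lt.ne']
  add_mem' {a b} ha hb := fun h =>
    (((Fact.out : p.Prime).dvd_mul.mp (h.trans (Rat.add_den_dvd a b))).elim ha hb)
  mul_mem' {a b} ha hb := fun h =>
    (((Fact.out : p.Prime).dvd_mul.mp (h.trans (Rat.mul_den_dvd a b))).elim ha hb)
  neg_mem' {a} ha := by simpa using ha

/-- Reduction mod `p` as a ring hom on `S p`. -/
noncomputable def phi : S p →+* ZMod p where
  toFun q := GB.redQ p q.1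
  map_one' := redQ_one p
  map_mul' a b := redQ_mul p a.2 b.2
  map_zero' := redQ_zero p
  map_add' a b := redQ_add p a.2 b.2

variable {n : ℕ}

theorem coeff_sum_mon {R : Type*} [CommSemiring R] (s : Finset (Fin n →₀ ℕ))
    (c : (Fin n →₀ ℕ) → R) (e : Fin n →₀ ℕ) :
    MvPolynomial.coeff e (∑ d ∈ s, MvPolynomial.monomial d (c d)) =
      if e ∈ s then c e else 0 := by
  classical
  rw [MvPolynomial.coeff_sum]
  simp only [MvPolynomial.coeff_monomial]
  exact Finset.sum_ite_eq' s e c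

theorem coeff_piP (f : MvPolynomial (Fin n) ℚ) (d : Fin n →₀ ℕ) :
    MvPolynomial.coeff d (GB.piP p f) = GB.redQ p (MvPolynomial.coeff d f) := by
  classical
  rw [GB.piP, coeff_sum_mon]
  split_ifs with h
  · rfl
  · rw [MvPolynomial.notMem_support_iff.mp h, redQ_zero]

theorem exists_lift {f : MvPolynomial (Fin n) ℚ}
    (h : ∀ d, ¬ p ∣ (MvPolynomial.coeff d f).den) :
    ∃ F : MvPolynomial (Fin n) (S p), MvPolynomial.map (S p).subtype F = f := by
  classical
  refine ⟨f.support.sum fun d => MvPolynomial.monomial d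
    (⟨MvPolynomial.coeff d f, h d⟩ : S p), ?_⟩
  ext e
  rw [MvPolynomial.coeff_map, coeff_sum_mon]
  split_ifs with he
  · rfl
  · simp [MvPolynomial.notMem_support_iff.mp he]

theorem piP_eq_map {f : MvPolynomial (Fin n) ℚ} {F : MvPolynomial (Fin n) (S p)}
    (h : MvPolynomial.map (S p).subtype F = f) :
    GB.piP p f = MvPolynomial.map (phi p) F := by
  ext d
  rw [coeff_piP, MvPolynomial.coeff_map, ← h, MvPolynomial.coeff_map]
  rfl

variable (m : MonomialOrder (Fin n))

theorem toSyn_lexp (f : MvPolynomial (Fin n) ℚ) :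
    m.toSyn (GB.lexp m f) = f.support.sup fun d => m.toSyn d :=
  m.toSyn.apply_symm_apply _

theorem le_lexp {f : MvPolynomial (Fin n) ℚ} {d : Fin n →₀ ℕ} (h : d ∈ f.support) :
    m.toSyn d ≤ m.toSyn (GB.lexp m f) := by
  rw [toSyn_lexp]; exact Finset.le_sup h

theorem lexp_mem_support {f : MvPolynomial (Fin n) ℚ} (h : f ≠ 0) :
    GB.lexp m f ∈ f.support := by
  obtain ⟨d, hd, hsup⟩ := Finset.exists_mem_eq_sup f.support
    (MvPolynomial.support_nonempty.mpr h) fun d => m.toSyn d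
  rw [GB.lexp, hsup]
  simpa using hd

theorem sub_cancel {f g : MvPolynomial (Fin n) ℚ}
    (hf : f ≠ 0) (hg0 : g ≠ 0) (hg1 : GB.lcoeff m g = 1)
    (hle : GB.lexp m g ≤ GB.lexp m f) :
    f - MvPolynomial.monomial (GB.lexp m f - GB.lexp m g) (GB.lcoeff m f) * g = 0 ∨
      m.toSyn (GB.lexp m
        (f - MvPolynomial.monomial (GB.lexp m f - GB.lexp m g) (GB.lcoeff m f) * g))
        < m.toSyn (GB.lexp m f) := by
  classical
  set a := GB.lexp m f - GB.lexp m g with ha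
  set c := GB.lcoeff m f with hc
  have hadd : a + GB.lexp m g = GB.lexp m f := tsub_add_cancel_of_le hle
  set f' := f - MvPolynomial.monomial a c * g with hf'
  have hzero : MvPolynomial.coeff (GB.lexp m f) f' = 0 := by
    rw [hf', MvPolynomial.coeff_sub, ← hadd, MvPolynomial.coeff_monomial_mul]
    rw [show MvPolynomial.coeff (GB.lexp m g) g = 1 from hg1, mul_one, hadd]
    rw [show MvPolynomial.coeff (GB.lexp m f) f = c from rfl]
    exact sub_self c
  have hbound : ∀ d ∈ f'.support, m.toSyn d ≤ m.toSyn (GB.lexp m f) := by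
    intro d hd
    rcases Finset.mem_union.mp (MvPolynomial.support_sub _ f _ hd) with h1 | h2
    · exact le_lexp m h1
    · have h3 := MvPolynomial.support_mul _ g h2
      rw [Finset.mem_add] at h3
      obtain ⟨x, hx, y, hy, rfl⟩ := h3
      have hxa : x = a := by
        rw [MvPolynomial.support_monomial] at hx
        by_cases hc0 : c = 0
        · simp [hc0] at hx
        · simp [hc0] at hx; exact hx
      have hy' : m.toSyn y ≤ m.toSyn (GB.lexp m g) := le_lexp m hy
      calc m.toSyn (x + y) = m.toSyn a + m.toSyn y := by rw [hxa, map_add]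
        _ ≤ m.toSyn a + m.toSyn (GB.lexp m g) := add_le_add (le_refl _) hy'
        _ = m.toSyn (GB.lexp m f) := by rw [← map_add, hadd]
  by_cases h0 : f' = 0
  · exact Or.inl h0
  · refine Or.inr ?_
    have hmem := lexp_mem_support m h0
    refine lt_of_le_of_ne (hbound _ hmem) fun he => ?_
    have : GB.lexp m f' = GB.lexp m f := m.toSyn.injective he
    exact MvPolynomial.mem_support_iff.mp hmem (this ▸ hzero)

theorem key {I : Ideal (MvPolynomial (Fin n) ℚ)} {G : Finset (MvPolynomial (Fin n) ℚ)}
    (hGB : GB.IsReducedGB m G I)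
    (hp : ∀ g ∈ G, ∀ d, ¬ p ∣ (MvPolynomial.coeff d g).den) :
    ∀ F : MvPolynomial (Fin n) (S p), MvPolynomial.map (S p).subtype F ∈ I →
      MvPolynomial.map (phi p) F ∈
        Ideal.span ((G.image (GB.piP p) : Finset (MvPolynomial (Fin n) (ZMod p))) :
          Set (MvPolynomial (Fin n) (ZMod p))) := by
  classical
  have hinj : Function.Injective ((S p).subtype) := Subtype.val_injective
  suffices H : ∀ deg : m.syn, ∀ F : MvPolynomial (Fin n) (S p),
      m.toSyn (GB.lexp m (MvPolynomial.map (S p).subtype F)) = deg →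
      MvPolynomial.map (S p).subtype F ∈ I →
      MvPolynomial.map (phi p) F ∈
        Ideal.span ((G.image (GB.piP p) : Finset (MvPolynomial (Fin n) (ZMod p))) :
          Set (MvPolynomial (Fin n) (ZMod p))) by
    intro F hF
    exact H _ F rfl hF
  intro deg
  induction deg using WellFoundedLT.induction with
  | _ deg ih =>
  intro F hdeg hF
  by_cases h0 : MvPolynomial.map (S p).subtype F = 0
  · have hF0 : F = 0 := MvPolynomial.map_injective _ hinj (by rw [h0, RingHom.map_zero])
    rw [hF0, RingHom.map_zero]
    exact Ideal.zero_mem _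
  · set f := MvPolynomial.map (S p).subtype F with hfdef
    obtain ⟨g, hgG, hle⟩ := hGB.1.2.2.2 f hF h0
    have hg0 : g ≠ 0 := fun h => hGB.1.1 (h ▸ hgG)
    have hg1 : GB.lcoeff m g = 1 := hGB.2.1 g hgG
    obtain ⟨Gg, hGg⟩ := exists_lift p (hp g hgG)
    set a := GB.lexp m f - GB.lexp m g with ha
    set cS : S p := MvPolynomial.coeff (GB.lexp m f) F with hcS
    have hcval : ((cS : ℚ)) = GB.lcoeff m f := by
      rw [hcS, GB.lcoeff, hfdef, MvPolynomial.coeff_map]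
      rfl
    set F' := F - MvPolynomial.monomial a cS * Gg with hF'
    have hmap' : MvPolynomial.map (S p).subtype F'
        = f - MvPolynomial.monomial a (GB.lcoeff m f) * g := by
      rw [hF', RingHom.map_sub, RingHom.map_mul, MvPolynomial.map_monomial, hGg, ← hcval]
      rfl
    have hIn' : MvPolynomial.map (S p).subtype F' ∈ I := by
      rw [hmap']
      exact I.sub_mem hF (I.mul_mem_left _ (hGB.1.2.1 hgG))
    have hpiPg : MvPolynomial.map (phi p) Gg ∈
        Ideal.span ((G.image (GB.piP p) : Finset (MvPolynomial (Fin n) (ZMod p))) :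
          Set (MvPolynomial (Fin n) (ZMod p))) := by
      apply Ideal.subset_span
      rw [← piP_eq_map p hGg]
      exact Finset.mem_coe.mpr (Finset.mem_image_of_mem _ hgG)
    have hdecomp : MvPolynomial.map (phi p) F
        = MvPolynomial.map (phi p) F'
          + MvPolynomial.monomial a (phi p cS) * MvPolynomial.map (phi p) Gg := by
      rw [hF', RingHom.map_sub, RingHom.map_mul, MvPolynomial.map_monomial]
      ring
    rcases sub_cancel m h0 hg0 hg1 hle with hz | hlt
    · have hF'0 : F' = 0 := MvPolynomial.map_injective _ hinj (by rw [hmap', hz, RingHom.map_zero])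
      rw [hdecomp, hF'0, RingHom.map_zero, zero_add]
      exact Ideal.mul_mem_left _ _ hpiPg
    · have hlt' : m.toSyn (GB.lexp m (MvPolynomial.map (S p).subtype F')) < deg := by
        rw [hmap', ← hdeg]
        exact hlt
      have hmem' := ih _ hlt' F' rfl hIn'
      rw [hdecomp]
      exact Ideal.add_mem _ hmem' (Ideal.mul_mem_left _ _ hpiPg)

theorem den_of_denF {G : Finset (MvPolynomial (Fin n) ℚ)} (hG : ¬ p ∣ GB.denF G)
    {g : MvPolynomial (Fin n) ℚ} (hg : g ∈ G) :
    ∀ d, ¬ p ∣ (MvPolynomial.coeff d g).den := by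
  intro d hdvd
  apply hG
  by_cases hd : d ∈ g.support
  · have h1 : (MvPolynomial.coeff d g).den ∣ GB.den g := by
      rw [show GB.den g = g.support.lcm (fun d => (MvPolynomial.coeff d g).den) from rfl]
      exact Finset.dvd_lcm hd
    have h2 : GB.den g ∣ GB.denF G := by
      rw [show GB.denF G = G.lcm GB.den from rfl]
      exact Finset.dvd_lcm hg
    exact dvd_trans (dvd_trans hdvd h1) h2
  · rw [MvPolynomial.notMem_support_iff.mp hd] at hdvd
    simp at hdvd
    exact absurd hdvd (Fact.out : p.Prime).one_lt.ne'

theorem span_mono_aux (mσ mτ : MonomialOrder (Fin n))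
    {I : Ideal (MvPolynomial (Fin n) ℚ)} {Gσ Gτ : Finset (MvPolynomial (Fin n) ℚ)}
    (hGσ : GB.IsReducedGB mσ Gσ I) (hGτ : GB.IsReducedGB mτ Gτ I)
    (hpσ : ¬ p ∣ GB.denF Gσ) (hpτ : ¬ p ∣ GB.denF Gτ) :
    Ideal.span ((Gτ.image (GB.piP p) : Finset (MvPolynomial (Fin n) (ZMod p))) :
        Set (MvPolynomial (Fin n) (ZMod p))) ≤
      Ideal.span ((Gσ.image (GB.piP p) : Finset (MvPolynomial (Fin n) (ZMod p))) :
        Set (MvPolynomial (Fin n) (ZMod p))) := by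
  rw [Ideal.span_le]
  intro x hx
  rw [Finset.coe_image, Set.mem_image] at hx
  obtain ⟨g, hg, rfl⟩ := hx
  obtain ⟨F, hF⟩ := exists_lift p (den_of_denF p hpτ hg)
  have hmem := key p mσ hGσ (fun g' hg' => den_of_denF p hpσ hg') F
    (by rw [hF]; exact hGτ.1.2.1 hg)
  rw [← piP_eq_map p hF] at hmem
  exact hmem

end GBAux


/-- if `p` is both σ-good and τ-good for `I` then
`⟨π_p(G_σ)⟩ = ⟨π_p(G_τ)⟩`. -/
theorem stmt9 {n : ℕ} (mσ mτ : MonomialOrder (Fin n))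
    (I : Ideal (MvPolynomial (Fin n) ℚ)) (Gσ Gτ : Finset (MvPolynomial (Fin n) ℚ))
    (hGσ : GB.IsReducedGB mσ Gσ I) (hGτ : GB.IsReducedGB mτ Gτ I)
    (p : ℕ) [Fact p.Prime] (hpσ : ¬ p ∣ GB.denF Gσ) (hpτ : ¬ p ∣ GB.denF Gτ) :
    Ideal.span ((Gσ.image (GB.piP p) : Finset (MvPolynomial (Fin n) (ZMod p))) :
        Set (MvPolynomial (Fin n) (ZMod p))) =
      Ideal.span ((Gτ.image (GB.piP p) : Finset (MvPolynomial (Fin n) (ZMod p))) :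
        Set (MvPolynomial (Fin n) (ZMod p))) := by
  exact le_antisymm
    (GBAux.span_mono_aux p mτ mσ hGτ hGσ hpτ hpσ)
    (GBAux.span_mono_aux p mσ mτ hGσ hGτ hpσ hpτ)
end
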